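/- In the stacked-book graph G_{m,3} = S_m □ P_3, if M is an induced matching containing an edge incident to the central vertex u_1 of the middle star layer S_m(2), then |M| = 1. -/

import Mathlib

open SimpleGraph

/-- The star graph on `m` vertices: vertex `0` is the center, the rest are leaves. -/
def starGraph (m : ℕ) : SimpleGraph (Fin m) :=
  SimpleGraph.fromRel (fun i _ => i.val = 0)

/-- `M` is an induced matching of `G`: every element of `M` is an edge of `G`, and no two
distinct edges of `M` share an endpoint or have endpoints joined by an edge of `G`. -/
def IsInducedMatching {V : Type*} (G : SimpleGraph V) (M : Finset (Sym2 V)) : Prop :=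
  ↑M ⊆ G.edgeSet ∧
    ∀ e₁ ∈ M, ∀ e₂ ∈ M, e₁ ≠ e₂ → ∀ u ∈ e₁, ∀ v ∈ e₂, u ≠ v ∧ ¬G.Adj u v

/-- The maximum induced matching number of `G`. -/
noncomputable def im {V : Type*} (G : SimpleGraph V) : ℕ :=
  sSup {k | ∃ M : Finset (Sym2 V), IsInducedMatching G M ∧ M.card = k}

/-- The stacked-book graph `G_{m,n} = S_m □ P_n`. -/
def stackedBook (m n : ℕ) : SimpleGraph (Fin m × Fin n) :=
  starGraph m □ SimpleGraph.pathGraph n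

theorem card_eq_one_of_middle_center_saturated (m : ℕ) (hm : 2 ≤ m)
    (M : Finset (Sym2 (Fin m × Fin 3))) (hM : IsInducedMatching (stackedBook m 3) M)
    (e : Sym2 (Fin m × Fin 3)) (he : e ∈ M) (hce : ((⟨0, by omega⟩ : Fin m), (1 : Fin 3)) ∈ e) :
    M.card = 1 := by
  obtain ⟨hsub, hind⟩ := hM
  set c : Fin m × Fin 3 := ((⟨0, by omega⟩ : Fin m), (1 : Fin 3)) with hc
  -- c is adjacent (in the graph) to every vertex v with v ≠ c that can be an endpoint
  -- of an edge together with another such vertex; show no second edge exists.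
  have key : ∀ e' ∈ M, e' = e := by
    intro e' he'
    by_contra hne
    obtain ⟨⟨a, b⟩, rfl⟩ := Quot.exists_rep e'
    have hadj : (stackedBook m 3).Adj a b := hsub he'
    have ha := hind _ he' e he hne a (Sym2.mem_mk_left a b) c hce
    have hb := hind _ he' e he hne b (Sym2.mem_mk_right a b) c hce
    -- properties of c: adjacent to (i,1) for i ≠ 0, and to (0,0), (0,2)
    have hadjc : ∀ v : Fin m × Fin 3, v ≠ c → ¬(stackedBook m 3).Adj v c →
        v.1.val ≠ 0 ∧ v.2.val ≠ 1 := by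
      intro v hv hnadj
      constructor
      · intro h0
        apply hnadj
        right
        refine ⟨?_, Fin.ext h0⟩
        rw [SimpleGraph.pathGraph_adj]
        have h2 : v.2.val ≠ 1 := by
          intro h1
          exact hv (Prod.ext (Fin.ext h0) (Fin.ext h1))
        have hv3 : v.2.val < 3 := v.2.isLt
        have hc2 : (c.2).val = 1 := rfl
        omega
      · intro h1
        apply hnadj
        left
        have h0 : v.1.val ≠ 0 := by
          intro h0
          exact hv (Prod.ext (Fin.ext h0) (Fin.ext h1))
        refine ⟨?_, Fin.ext h1⟩
        unfold _root_.starGraph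
        rw [SimpleGraph.fromRel_adj]
        exact ⟨fun h => h0 (by simp [h, hc]), Or.inr rfl⟩
    have ha' := hadjc a ha.1 ha.2
    have hb' := hadjc b hb.1 hb.2
    -- but a, b adjacent in the graph forces one of them to have first coord 0 or
    -- second coord 1
    rcases hadj with ⟨hs, _⟩ | ⟨hp, _⟩
    · unfold _root_.starGraph at hs
      rw [SimpleGraph.fromRel_adj] at hs
      rcases hs.2 with h | h
      · exact ha'.1 h
      · exact hb'.1 h
    · rw [SimpleGraph.pathGraph_adj] at hp
      have := ha'.2; have := hb'.2
      have h2a : a.2.val < 3 := a.2.isLt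
      have h2b : b.2.val < 3 := b.2.isLt
      omega
  rw [Finset.card_eq_one]
  exact ⟨e, Finset.eq_singleton_iff_unique_mem.mpr ⟨he, key⟩⟩
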